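/- Let q be a prime power, n ≥ 1, and let S, S' be F_q-bilinear multiplications on F_{q^n} that are strongly isotopic, i.e., S'(F(x),G(y)) = S(x,y) for all x, y for some bijective F_q-linear maps F, G : F_{q^n} → F_{q^n}. Then rank M(S') = rank M(S). -/

import Mathlib

set_option linter.unusedSectionVars false
set_option linter.unusedVariables false
set_option maxHeartbeats 1000000

open Finset Polynomial

/-- `M` is the matrix of the multiplication `S`, i.e. `S x y = ∑_{i,j} M i j * x^{q^i} * y^{q^j}`. -/
def IsMatrixOf (q n : ℕ) (K : Type) [Field K]
    (S : K → K → K) (M : Matrix (Fin n) (Fin n) K) : Prop :=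
  ∀ x y : K, S x y = ∑ i : Fin n, ∑ j : Fin n, M i j * x ^ q ^ (i : ℕ) * y ^ q ^ (j : ℕ)


section Aux

variable {q n : ℕ} {F K : Type} [Field F] [Field K] [Algebra F K] [Fintype F] [Fintype K]

lemma exists_pow_q_ringHom (hcF : Fintype.card F = q) (i : ℕ) :
    ∃ φ : K →+* K, ∀ x : K, φ x = x ^ q ^ i := by
  haveI : CharP F (ringChar F) := ringChar.charP F
  obtain ⟨m, hp, hF⟩ := FiniteField.card F (ringChar F)
  haveI : CharP K (ringChar F) :=
    charP_of_injective_algebraMap (algebraMap F K).injective (ringChar F)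
  haveI : Fact (Nat.Prime (ringChar F)) := ⟨hp⟩
  refine ⟨iterateFrobenius K (ringChar F) (m * i), fun x => ?_⟩
  rw [iterateFrobenius_def, ← hcF, hF, ← pow_mul]


lemma fq_pow_fix (hcF : Fintype.card F = q) (c : F) (i : ℕ) : c ^ q ^ i = c := by
  induction i with
  | zero => simp
  | succ k ih => rw [pow_succ, pow_mul, ih, ← hcF, FiniteField.pow_card]


lemma pow_q_mod (hcK : Fintype.card K = q ^ n) (x : K) (i : ℕ) :
    x ^ q ^ i = x ^ q ^ (i % n) := by
  conv_lhs => rw [← Nat.mod_add_div i n]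
  generalize i / n = k
  induction k with
  | zero => simp
  | succ k ih =>
      rw [Nat.mul_succ, ← Nat.add_assoc, pow_add, pow_mul, ← hcK, FiniteField.pow_card, ih]


lemma coeffs_zero (hq2 : 2 ≤ q) (hn : 1 ≤ n) (hcK : Fintype.card K = q ^ n)
    (c : Fin n → K) (h : ∀ y : K, ∑ j : Fin n, c j * y ^ q ^ (j : ℕ) = 0) : c = 0 := by
  classical
  set P : Polynomial K := ∑ j : Fin n, Polynomial.C (c j) * Polynomial.X ^ q ^ (j : ℕ) with hPdef
  have hP : P = 0 := by
    apply Polynomial.eq_zero_of_natDegree_lt_card_of_eval_eq_zero P Function.injective_id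
    · intro y
      simp only [hPdef, Polynomial.eval_finset_sum, Polynomial.eval_mul, Polynomial.eval_C,
        Polynomial.eval_pow, Polynomial.eval_X, id_eq]
      exact h y
    · have hdeg : P.natDegree ≤ q ^ (n - 1) := by
        apply Polynomial.natDegree_sum_le_of_forall_le
        intro j _
        refine le_trans (Polynomial.natDegree_C_mul_le _ _) ?_
        rw [Polynomial.natDegree_X_pow]
        exact Nat.pow_le_pow_right (by omega) (by omega)
      calc P.natDegree ≤ q ^ (n - 1) := hdeg
        _ < q ^ n := Nat.pow_lt_pow_right (by omega) (by omega)
        _ = Fintype.card K := hcK.symm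
  funext j
  have hcoeff := congrArg (fun Q => Polynomial.coeff Q (q ^ (j : ℕ))) hP
  simp only [hPdef, Polynomial.finset_sum_coeff, Polynomial.coeff_C_mul,
    Polynomial.coeff_X_pow, Polynomial.coeff_zero] at hcoeff
  rw [Finset.sum_eq_single j] at hcoeff
  · simpa using hcoeff
  · intro i _ hij
    have : ¬ (q ^ (j : ℕ) = q ^ (i : ℕ)) := by
      intro hqe
      exact hij (Fin.ext (Nat.pow_right_injective hq2 hqe.symm))
    simp [this]
  · simp


lemma matrix_unique (hq2 : 2 ≤ q) (hn : 1 ≤ n) (hcK : Fintype.card K = q ^ n)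
    (M N : Matrix (Fin n) (Fin n) K)
    (h : ∀ x y : K, ∑ i : Fin n, ∑ j : Fin n, M i j * x ^ q ^ (i : ℕ) * y ^ q ^ (j : ℕ)
        = ∑ i : Fin n, ∑ j : Fin n, N i j * x ^ q ^ (i : ℕ) * y ^ q ^ (j : ℕ)) : M = N := by
  have key : ∀ (x : K) (j : Fin n), ∑ i : Fin n, (M i j - N i j) * x ^ q ^ (i : ℕ) = 0 := by
    intro x
    have hx : ∀ y : K, ∑ j : Fin n,
        (∑ i : Fin n, (M i j - N i j) * x ^ q ^ (i : ℕ)) * y ^ q ^ (j : ℕ) = 0 := by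
      intro y
      have := h x y
      rw [← sub_eq_zero] at this
      rw [← this]
      simp only [← Finset.sum_sub_distrib, Finset.sum_mul]
      rw [Finset.sum_comm]
      apply Finset.sum_congr rfl
      intro j _
      apply Finset.sum_congr rfl
      intro i _
      ring
    have := coeffs_zero hq2 hn hcK _ hx
    intro j
    exact congrFun this j
  ext i j
  have := coeffs_zero hq2 hn hcK (fun i => M i j - N i j) (fun x => key x j)
  have := congrFun this i
  simpa [sub_eq_zero] using this


lemma exists_coeffs (hn : 1 ≤ n) (hcF : Fintype.card F = q) (hcK : Fintype.card K = q ^ n)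
    (f : K →ₗ[F] K) : ∃ a : Fin n → K, ∀ x : K, f x = ∑ i : Fin n, a i * x ^ q ^ (i : ℕ) := by
  classical
  have hq2 : 2 ≤ q := by
    rw [← hcF]; exact Fintype.one_lt_card
  -- each x ↦ x ^ q ^ i is F-linear
  have hadd : ∀ (i : ℕ) (x y : K), (x + y) ^ q ^ i = x ^ q ^ i + y ^ q ^ i := by
    intro i x y
    obtain ⟨φ, hφ⟩ := exists_pow_q_ringHom (K := K) hcF i
    rw [← hφ, ← hφ, ← hφ, map_add]
  let e : ℕ → (K →ₗ[F] K) := fun i =>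
    { toFun := fun x => x ^ q ^ i
      map_add' := hadd i
      map_smul' := fun c x => by
        simp only [Algebra.smul_def, mul_pow, RingHom.id_apply]
        rw [← map_pow, fq_pow_fix hcF c i] }
  let Φ : (Fin n → K) →ₗ[F] (K →ₗ[F] K) :=
    { toFun := fun a => ∑ i : Fin n, ((Algebra.lmul F K) (a i)).comp (e (i : ℕ))
      map_add' := fun a b => by
        rw [← Finset.sum_add_distrib]
        apply Finset.sum_congr rfl
        intro i _
        rw [Pi.add_apply, map_add, LinearMap.add_comp]
      map_smul' := fun c a => by
        rw [RingHom.id_apply, Finset.smul_sum]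
        apply Finset.sum_congr rfl
        intro i _
        rw [Pi.smul_apply, ← LinearMap.smul_comp]
        congr 1
        exact map_smul (Algebra.lmul F K).toLinearMap c (a i) }
  have hΦ : ∀ (a : Fin n → K) (x : K), Φ a x = ∑ i : Fin n, a i * x ^ q ^ (i : ℕ) := by
    intro a x
    simp [Φ, e, LinearMap.sum_apply]
  have hinj : Function.Injective Φ := by
    rw [← LinearMap.ker_eq_bot]
    rw [LinearMap.ker_eq_bot']
    intro a ha
    apply coeffs_zero hq2 hn hcK
    intro y
    rw [← hΦ a y, ha]
    rfl
  have hrankK : Module.finrank F K = n := by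
    have h1 : Fintype.card K = Fintype.card F ^ Module.finrank F K := Module.card_eq_pow_finrank
    rw [hcF, hcK] at h1
    exact (Nat.pow_right_injective hq2 h1.symm)
  have hfr : Module.finrank F (Fin n → K) = Module.finrank F (K →ₗ[F] K) := by
    rw [Module.finrank_pi_fintype, Module.finrank_linearMap, hrankK]
    simp [Finset.sum_const, mul_comm]
  have hsurj : Function.Surjective Φ := by
    rw [← LinearMap.range_eq_top]
    rw [← (LinearMap.ker_eq_bot_iff_range_eq_top_of_finrank_eq_finrank hfr)]
    rw [LinearMap.ker_eq_bot]
    exact hinj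
  obtain ⟨a, ha⟩ := hsurj f
  exact ⟨a, fun x => by rw [← ha, hΦ]⟩


lemma sum4_comm (f : Fin n → Fin n → Fin n → Fin n → K) :
    ∑ i : Fin n, ∑ j : Fin n, ∑ s : Fin n, ∑ t : Fin n, f i j s t
      = ∑ s : Fin n, ∑ t : Fin n, ∑ i : Fin n, ∑ j : Fin n, f i j s t :=
  calc ∑ i : Fin n, ∑ j : Fin n, ∑ s : Fin n, ∑ t : Fin n, f i j s t
      = ∑ i : Fin n, ∑ s : Fin n, ∑ j : Fin n, ∑ t : Fin n, f i j s t :=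
        Finset.sum_congr rfl fun i _ => Finset.sum_comm
    _ = ∑ s : Fin n, ∑ i : Fin n, ∑ j : Fin n, ∑ t : Fin n, f i j s t := Finset.sum_comm
    _ = ∑ s : Fin n, ∑ i : Fin n, ∑ t : Fin n, ∑ j : Fin n, f i j s t :=
        Finset.sum_congr rfl fun s _ => Finset.sum_congr rfl fun i _ => Finset.sum_comm
    _ = ∑ s : Fin n, ∑ t : Fin n, ∑ i : Fin n, ∑ j : Fin n, f i j s t :=
        Finset.sum_congr rfl fun s _ => Finset.sum_comm


lemma rank_le_aux (hn : 1 ≤ n) (hcF : Fintype.card F = q) (hcK : Fintype.card K = q ^ n)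
    (S S' : K →ₗ[F] K →ₗ[F] K) (f g : K →ₗ[F] K)
    (hiso : ∀ x y : K, S' (f x) (g y) = S x y)
    (M M' : Matrix (Fin n) (Fin n) K)
    (hM : IsMatrixOf q n K (fun x y => S x y) M)
    (hM' : IsMatrixOf q n K (fun x y => S' x y) M') : M.rank ≤ M'.rank := by
  classical
  haveI : NeZero n := ⟨by omega⟩
  have hq2 : 2 ≤ q := by rw [← hcF]; exact Fintype.one_lt_card
  obtain ⟨a, ha⟩ := exists_coeffs hn hcF hcK f
  obtain ⟨b, hb⟩ := exists_coeffs hn hcF hcK g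
  -- the twisted-sum identity
  have hpow : ∀ (c : Fin n → K) (u : K) (i : Fin n),
      (∑ k : Fin n, c k * u ^ q ^ (k : ℕ)) ^ q ^ (i : ℕ)
        = ∑ s : Fin n, c (s - i) ^ q ^ (i : ℕ) * u ^ q ^ (s : ℕ) := by
    intro c u i
    obtain ⟨φ, hφ⟩ := exists_pow_q_ringHom (K := K) hcF (i : ℕ)
    rw [← hφ, map_sum]
    refine Fintype.sum_equiv (Equiv.addRight i) _ _ (fun k => ?_)
    rw [map_mul, hφ, hφ]
    simp only [Equiv.coe_addRight, add_sub_cancel_right]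
    congr 1
    rw [← pow_mul, ← pow_add, pow_q_mod hcK, Fin.val_add]
  set N : Matrix (Fin n) (Fin n) K :=
    fun s t => ∑ i : Fin n, ∑ j : Fin n,
      M' i j * a (s - i) ^ q ^ (i : ℕ) * b (t - j) ^ q ^ (j : ℕ) with hN
  have expand : ∀ (c : K) (P Q : Fin n → K),
      c * (∑ s : Fin n, P s) * (∑ t : Fin n, Q t) = ∑ s : Fin n, ∑ t : Fin n, c * P s * Q t := by
    intro c P Q
    calc c * (∑ s : Fin n, P s) * (∑ t : Fin n, Q t)
        = ∑ t : Fin n, ∑ s : Fin n, c * P s * Q t := by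
          rw [Finset.mul_sum Finset.univ Q (c * ∑ s : Fin n, P s)]
          refine Finset.sum_congr rfl fun t _ => ?_
          rw [Finset.mul_sum Finset.univ P c, Finset.sum_mul]
      _ = ∑ s : Fin n, ∑ t : Fin n, c * P s * Q t := Finset.sum_comm
  have hM'e : ∀ u v : K, S' u v = ∑ i : Fin n, ∑ j : Fin n,
      M' i j * u ^ q ^ (i : ℕ) * v ^ q ^ (j : ℕ) := hM'
  have key : IsMatrixOf q n K (fun x y => S x y) N := by
    intro x y
    show S x y = _
    rw [← hiso x y]
    rw [hM'e (f x) (g y)]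
    calc ∑ i : Fin n, ∑ j : Fin n, M' i j * (f x) ^ q ^ (i : ℕ) * (g y) ^ q ^ (j : ℕ)
        = ∑ i : Fin n, ∑ j : Fin n, ∑ s : Fin n, ∑ t : Fin n,
            M' i j * (a (s - i) ^ q ^ (i : ℕ) * x ^ q ^ (s : ℕ))
              * (b (t - j) ^ q ^ (j : ℕ) * y ^ q ^ (t : ℕ)) := by
          refine Finset.sum_congr rfl fun i _ => Finset.sum_congr rfl fun j _ => ?_
          rw [ha, hb, hpow a x i, hpow b y j, expand]
      _ = ∑ s : Fin n, ∑ t : Fin n, ∑ i : Fin n, ∑ j : Fin n,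
            M' i j * (a (s - i) ^ q ^ (i : ℕ) * x ^ q ^ (s : ℕ))
              * (b (t - j) ^ q ^ (j : ℕ) * y ^ q ^ (t : ℕ)) := sum4_comm _
      _ = ∑ s : Fin n, ∑ t : Fin n, N s t * x ^ q ^ (s : ℕ) * y ^ q ^ (t : ℕ) := by
          refine Finset.sum_congr rfl fun s _ => Finset.sum_congr rfl fun t _ => ?_
          rw [hN]
          simp only [Finset.sum_mul]
          refine Finset.sum_congr rfl fun i _ => Finset.sum_congr rfl fun j _ => ?_
          ring
  have hMN : M = N := matrix_unique hq2 hn hcK M N (fun x y => by rw [← hM x y, ← key x y])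
  set A : Matrix (Fin n) (Fin n) K := fun s i => a (s - i) ^ q ^ (i : ℕ) with hA
  set B : Matrix (Fin n) (Fin n) K := fun j t => b (t - j) ^ q ^ (j : ℕ) with hB
  have hNAB : N = A * M' * B := by
    ext s t
    rw [hN]
    simp only [Matrix.mul_apply, Finset.sum_mul]
    simp only [hA, hB]
    rw [Finset.sum_comm]
    refine Finset.sum_congr rfl fun i _ => Finset.sum_congr rfl fun j _ => ?_
    ring
  rw [hMN, hNAB]
  calc (A * M' * B).rank ≤ (A * M').rank := Matrix.rank_mul_le_left _ _
    _ ≤ M'.rank := Matrix.rank_mul_le_right _ _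


end Aux

/-- strongly isotopic bilinear multiplications have matrices of equal rank. -/
theorem stmt3 (q n : ℕ) (hq : IsPrimePow q) (hn : 1 ≤ n)
    (F K : Type) [Field F] [Field K] [Algebra F K] [Fintype F] [Fintype K]
    (hcF : Fintype.card F = q) (hcK : Fintype.card K = q ^ n)
    (S S' : K →ₗ[F] K →ₗ[F] K) (Fm Gm : K ≃ₗ[F] K)
    (hiso : ∀ x y : K, S' (Fm x) (Gm y) = S x y)
    (M M' : Matrix (Fin n) (Fin n) K)
    (hM : IsMatrixOf q n K (fun x y => S x y) M)
    (hM' : IsMatrixOf q n K (fun x y => S' x y) M') :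
    M'.rank = M.rank := by
  have hiso2 : ∀ x y : K, S' (Fm.toLinearMap x) (Gm.toLinearMap y) = S x y := by
    intro x y; simpa using hiso x y
  have hiso' : ∀ x y : K, S (Fm.symm.toLinearMap x) (Gm.symm.toLinearMap y) = S' x y := by
    intro x y
    have h := hiso (Fm.symm x) (Gm.symm y)
    simpa using h.symm
  exact le_antisymm
    (rank_le_aux hn hcF hcK S' S Fm.symm.toLinearMap Gm.symm.toLinearMap hiso' M' M hM' hM)
    (rank_le_aux hn hcF hcK S S' Fm.toLinearMap Gm.toLinearMap hiso2 M M' hM hM')
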